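/- Let K be a finite simplicial complex with scat K > 0 and let ΣK = K ∗ S⁰ be the simplicial suspension of K (the join with a two-point complex). Then scat(ΣK) = 1. -/

import Mathlib

/-- An abstract simplicial complex on a vertex type `V`:
a downward-closed family of nonempty finite sets of vertices. -/
structure AbsSC (V : Type) where
  faces : Set (Finset V)
  nonempty_of_mem : ∀ σ ∈ faces, σ.Nonempty
  down_closed : ∀ σ ∈ faces, ∀ τ : Finset V, τ ⊆ σ → τ.Nonempty → τ ∈ faces

namespace AbsSC

variable {V W V' W' : Type} [DecidableEq V] [DecidableEq W]

/-- `f` is a simplicial map from `K` to `L`. -/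
def IsSimplicial (K : AbsSC V) (L : AbsSC W) (f : V → W) : Prop :=
  ∀ σ ∈ K.faces, σ.image f ∈ L.faces

/-- Two simplicial maps are contiguous. -/
def Contig (K : AbsSC V) (L : AbsSC W) (f g : V → W) : Prop :=
  IsSimplicial K L f ∧ IsSimplicial K L g ∧
    ∀ σ ∈ K.faces, σ.image f ∪ σ.image g ∈ L.faces

/-- Two maps are in the same contiguity class: they are connected by a
finite chain of pairwise contiguous simplicial maps. -/
def ContigClass (K : AbsSC V) (L : AbsSC W) : (V → W) → (V → W) → Prop :=
  Relation.ReflTransGen (Contig K L)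

/-- `U` is a categorical subcomplex of `K`: the inclusion is in the
contiguity class of a constant map onto a vertex of `K`. -/
def Categorical (K U : AbsSC V) : Prop :=
  U.faces ⊆ K.faces ∧ ∃ v : V, {v} ∈ K.faces ∧ ContigClass U K id (fun _ => v)

/-- `K` is covered by `n+1` categorical subcomplexes. -/
def CatCover (K : AbsSC V) (n : ℕ) : Prop :=
  ∃ U : Fin (n + 1) → AbsSC V, (∀ i, Categorical K (U i)) ∧
    ∀ σ ∈ K.faces, ∃ i, σ ∈ (U i).faces

/-- The simplicial Lusternik–Schnirelmann category of `K`. -/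
noncomputable def scat (K : AbsSC V) : ℕ := sInf {n | CatCover K n}

/-- A maximal simplex of `K`. -/
def MaximalFace (K : AbsSC V) (σ : Finset V) : Prop :=
  σ ∈ K.faces ∧ ∀ τ ∈ K.faces, σ ⊆ τ → σ = τ

/-- The vertex `v` is dominated (by some other vertex `v'`). -/
def Dominated (K : AbsSC V) (v : V) : Prop :=
  ∃ v' : V, v' ≠ v ∧ {v} ∈ K.faces ∧ {v'} ∈ K.faces ∧
    ∀ σ : Finset V, MaximalFace K σ → v ∈ σ → v' ∈ σ

/-- A minimal complex: no vertex is dominated. -/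
def Minimal (K : AbsSC V) : Prop := ∀ v : V, ¬ Dominated K v

/-- Deleting (the open star of) a vertex. -/
def delete (K : AbsSC V) (v : V) : AbsSC V where
  faces := {σ ∈ K.faces | v ∉ σ}
  nonempty_of_mem := fun σ h => K.nonempty_of_mem σ h.1
  down_closed := fun σ h τ hτ hne =>
    ⟨K.down_closed σ h.1 τ hτ hne, fun hv => h.2 (hτ hv)⟩

/-- An elementary strong collapse: removal of the open star of a dominated vertex. -/
def ElemStrongCollapse (K L : AbsSC V) : Prop :=
  ∃ v : V, Dominated K v ∧ L = K.delete v

/-- A complex consisting of a single vertex. -/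
def IsPoint (K : AbsSC V) : Prop := ∃ v : V, K.faces = {{v}}

/-- `K` is strongly collapsible: it reduces to a single vertex by a
sequence of elementary strong collapses. -/
def StronglyCollapsible (K : AbsSC V) : Prop :=
  ∃ L : AbsSC V, Relation.ReflTransGen ElemStrongCollapse K L ∧ IsPoint L

/-- `K` is covered by `n+1` subcomplexes, each strongly collapsible in itself. -/
def GCatCover (K : AbsSC V) (n : ℕ) : Prop :=
  ∃ U : Fin (n + 1) → AbsSC V,
    (∀ i, (U i).faces ⊆ K.faces ∧ StronglyCollapsible (U i)) ∧
    ∀ σ ∈ K.faces, ∃ i, σ ∈ (U i).faces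

/-- The geometric simplicial category of `K`. -/
noncomputable def gscat (K : AbsSC V) : ℕ := sInf {n | GCatCover K n}

/-- Strong homotopy equivalence of complexes. -/
def StrongEquiv (K : AbsSC V) (L : AbsSC W) : Prop :=
  ∃ (φ : V → W) (ψ : W → V), IsSimplicial K L φ ∧ IsSimplicial L K ψ ∧
    ContigClass K K (ψ ∘ φ) id ∧ ContigClass L L (φ ∘ ψ) id

/-- The barycentric subdivision: vertices are the simplices of `K`,
simplices are the chains of simplices of `K`. -/
def sd (K : AbsSC V) : AbsSC (Finset V) where
  faces := {S | S.Nonempty ∧ (∀ σ ∈ S, σ ∈ K.faces) ∧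
    ∀ σ ∈ S, ∀ τ ∈ S, σ ⊆ τ ∨ τ ⊆ σ}
  nonempty_of_mem := fun S hS => hS.1
  down_closed := fun S hS T hTS hT =>
    ⟨hT, fun σ hσ => hS.2.1 σ (hTS hσ),
      fun σ hσ τ hτ => hS.2.2 σ (hTS hσ) τ (hTS hτ)⟩

/-- The categorical product of simplicial complexes. -/
def prod (K : AbsSC V) (L : AbsSC W) : AbsSC (V × W) where
  faces := {σ | σ.Nonempty ∧ σ.image Prod.fst ∈ K.faces ∧ σ.image Prod.snd ∈ L.faces}
  nonempty_of_mem := fun σ h => h.1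
  down_closed := fun σ h τ hτ hne =>
    ⟨hne, K.down_closed _ h.2.1 _ (Finset.image_subset_image hτ) (hne.image _),
      L.down_closed _ h.2.2 _ (Finset.image_subset_image hτ) (hne.image _)⟩

/-- The `n`-fold categorical power of `K`. -/
def power (K : AbsSC V) (n : ℕ) : AbsSC (Fin n → V) where
  faces := {σ | σ.Nonempty ∧ ∀ j : Fin n, σ.image (fun f => f j) ∈ K.faces}
  nonempty_of_mem := fun σ h => h.1
  down_closed := by
    intro σ h τ hτ hne
    exact ⟨hne, fun j => K.down_closed _ (h.2 j) _ (Finset.image_subset_image hτ) (hne.image _)⟩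

/-- The `n`-th fat wedge of a pointed complex `(K, v₀)` inside `Kⁿ`. -/
def fatWedge (K : AbsSC V) (n : ℕ) (v₀ : V) : AbsSC (Fin n → V) where
  faces := {σ | σ ∈ (K.power n).faces ∧ ∃ j : Fin n, ∀ f ∈ σ, f j = v₀}
  nonempty_of_mem := fun σ h => (K.power n).nonempty_of_mem σ h.1
  down_closed := fun σ h τ hτ hne =>
    ⟨(K.power n).down_closed σ h.1 τ hτ hne,
      h.2.imp fun j hj f hf => hj f (hτ hf)⟩

/-- The part of a set of vertices of a disjoint union lying in the left factor. -/
noncomputable def sumLeft (σ : Finset (V ⊕ W)) : Finset V :=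
  σ.preimage Sum.inl Sum.inl_injective.injOn

/-- The part of a set of vertices of a disjoint union lying in the right factor. -/
noncomputable def sumRight (σ : Finset (V ⊕ W)) : Finset W :=
  σ.preimage Sum.inr Sum.inr_injective.injOn

/-- The simplicial join `K ∗ L`. -/
def join (K : AbsSC V) (L : AbsSC W) : AbsSC (V ⊕ W) where
  faces := {σ | σ.Nonempty ∧ ((sumLeft σ).Nonempty → sumLeft σ ∈ K.faces) ∧
    ((sumRight σ).Nonempty → sumRight σ ∈ L.faces)}
  nonempty_of_mem := fun σ h => h.1
  down_closed := by
    intro σ h τ hτ hne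
    have hl : sumLeft τ ⊆ sumLeft σ := fun x hx => by
      rw [sumLeft, Finset.mem_preimage] at *; exact hτ hx
    have hr : sumRight τ ⊆ sumRight σ := fun x hx => by
      rw [sumRight, Finset.mem_preimage] at *; exact hτ hx
    exact ⟨hne,
      fun h1 => K.down_closed _ (h.2.1 (h1.mono hl)) _ hl h1,
      fun h1 => L.down_closed _ (h.2.2 (h1.mono hr)) _ hr h1⟩

/-- A graph: a simplicial complex of dimension at most 1. -/
def IsGraph (G : AbsSC V) : Prop := ∀ σ ∈ G.faces, σ.card ≤ 2

/-- A connected (nonempty) complex: any two vertices are joined by an edge path. -/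
def ConnectedG (G : AbsSC V) : Prop :=
  G.faces.Nonempty ∧
    ∀ u v : V, {u} ∈ G.faces → {v} ∈ G.faces →
      ∃ (n : ℕ) (p : Fin (n + 1) → V), p 0 = u ∧ p (Fin.last n) = v ∧
        ∀ i : Fin n, ({p i.castSucc, p i.succ} : Finset V) ∈ G.faces

/-- A cycle of length `n` in a graph: `n ≥ 3` distinct vertices joined cyclically by edges. -/
def IsCycle (G : AbsSC V) (n : ℕ) (p : ZMod n → V) : Prop :=
  3 ≤ n ∧ Function.Injective p ∧
    ∀ i : ZMod n, ({p i, p (i + 1)} : Finset V) ∈ G.faces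

/-- A forest: a graph containing no cycle. -/
def IsForest (G : AbsSC V) : Prop := ∀ (n : ℕ) (p : ZMod n → V), ¬ IsCycle G n p

/-- A tree: a connected forest. -/
def IsTree (G : AbsSC V) : Prop := IsForest G ∧ ConnectedG G

/-- A decomposition of a graph into `k` edge-disjoint spanning forests. -/
def EdgeDisjointForestDecomp (G : AbsSC V) (k : ℕ) : Prop :=
  ∃ F : Fin k → AbsSC V,
    (∀ i, (F i).faces ⊆ G.faces ∧ IsForest (F i) ∧
      ∀ v : V, {v} ∈ G.faces → {v} ∈ (F i).faces) ∧
    (∀ σ ∈ G.faces, ∃ i, σ ∈ (F i).faces) ∧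
    ∀ (i j : Fin k) (σ : Finset V), σ.card = 2 →
      σ ∈ (F i).faces → σ ∈ (F j).faces → i = j

/-- The arboricity of a graph. -/
noncomputable def arboricity (G : AbsSC V) : ℕ :=
  sInf {k | EdgeDisjointForestDecomp G k}


end AbsSC

namespace AbsSC

variable {V W : Type} [DecidableEq V] [DecidableEq W]

/-! ### Basic lemmas -/

theorem ext_faces {K L : AbsSC V} (h : K.faces = L.faces) : K = L := by
  cases K; cases L; simp only at h; subst h; rfl

theorem vertex_of_mem_face {K : AbsSC V} {σ : Finset V} (hσ : σ ∈ K.faces) {u : V}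
    (hu : u ∈ σ) : ({u} : Finset V) ∈ K.faces :=
  K.down_closed σ hσ {u} (Finset.singleton_subset_iff.2 hu) (Finset.singleton_nonempty u)

theorem contig_symm {K : AbsSC V} {L : AbsSC W} {f g : V → W} (h : Contig K L f g) :
    Contig K L g f :=
  ⟨h.2.1, h.1, fun σ hσ => by rw [Finset.union_comm]; exact h.2.2 σ hσ⟩

theorem contigClass_symm {K : AbsSC V} {L : AbsSC W} {f g : V → W}
    (h : ContigClass K L f g) : ContigClass K L g f := by
  induction h with
  | refl => exact Relation.ReflTransGen.refl
  | tail _ hbc ih => exact Relation.ReflTransGen.head (contig_symm hbc) ih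

theorem contig_congr {K K' : AbsSC V} {L : AbsSC W} (h : K.faces = K'.faces)
    {f g : V → W} (hc : Contig K L f g) : Contig K' L f g := by
  unfold Contig IsSimplicial at *
  rw [← h]; exact hc

theorem contigClass_congr {K K' : AbsSC V} {L : AbsSC W} (h : K.faces = K'.faces)
    {f g : V → W} (hc : ContigClass K L f g) : ContigClass K' L f g :=
  Relation.ReflTransGen.mono (fun _ _ hab => contig_congr h hab) _ _ hc

theorem exists_maximal [Fintype V] (K : AbsSC V) {σ0 : Finset V} (h : σ0 ∈ K.faces) :
    ∃ τ, MaximalFace K τ ∧ σ0 ⊆ τ := by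
  have hfin : {τ | τ ∈ K.faces ∧ σ0 ⊆ τ}.Finite := Set.toFinite _
  obtain ⟨τ, hτ, hmax⟩ := hfin.exists_maximalFor Finset.card _ ⟨σ0, h, subset_rfl⟩
  refine ⟨τ, ⟨hτ.1, fun ρ hρ hsub => ?_⟩, hτ.2⟩
  have : ρ ∈ {τ | τ ∈ K.faces ∧ σ0 ⊆ τ} := ⟨hρ, hτ.2.trans hsub⟩
  exact (Finset.eq_of_subset_of_card_le hsub
    (hmax this (Finset.card_le_card hsub))).symm ▸ rfl

theorem image_eq_self {σ : Finset V} {f : V → V} (h : ∀ x ∈ σ, f x = x) :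
    σ.image f = σ := by
  have : σ.image f = σ.image id := Finset.image_congr (fun x hx => h x hx)
  rw [this, Finset.image_id]

/-- Contractibility in the contiguity sense. -/
def Contractible (K : AbsSC V) : Prop :=
  ∃ v : V, {v} ∈ K.faces ∧ ContigClass K K id (fun _ => v)

/-! ### Rigidity of minimal complexes -/

theorem rigid_step {M : AbsSC V} (hM : Minimal M) {b c : V → V}
    (hb : ∀ v, {v} ∈ M.faces → b v = v) (hbc : Contig M M b c) :
    ∀ v, {v} ∈ M.faces → c v = v := by
  intro v hv
  by_contra hne
  refine hM v ⟨c v, hne, hv, ?_, ?_⟩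
  · have := hbc.2.1 {v} hv
    rwa [Finset.image_singleton] at this
  · intro σ hσ hvσ
    have hface : σ.image b ∪ σ.image c ∈ M.faces := hbc.2.2 σ hσ.1
    have hbσ : σ.image b = σ := image_eq_self (fun x hx => hb x (vertex_of_mem_face hσ.1 hx))
    rw [hbσ] at hface
    have := hσ.2 _ hface Finset.subset_union_left
    have hsub : σ.image c ⊆ σ := by
      intro x hx
      have hx' : x ∈ σ ∪ σ.image c := Finset.mem_union_right _ hx
      rwa [← this] at hx'
    exact hsub (Finset.mem_image_of_mem c hvσ)

theorem rigid {M : AbsSC V} (hM : Minimal M) {f : V → V}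
    (h : ContigClass M M id f) : ∀ v, {v} ∈ M.faces → f v = v := by
  induction h with
  | refl => exact fun v _ => rfl
  | tail _ hbc ih => exact rigid_step hM ih hbc

/-! ### Transfer of contractibility -/

theorem contig_comp {K : AbsSC V} {L : AbsSC W} {f g : V → V} {φ : V → W} {ψ : W → V}
    (h : Contig K K f g) (hφ : IsSimplicial K L φ) (hψ : IsSimplicial L K ψ) :
    Contig L L (φ ∘ f ∘ ψ) (φ ∘ g ∘ ψ) := by
  have himg : ∀ (u : V → V), ∀ σ : Finset W, σ.image (φ ∘ u ∘ ψ) =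
      ((σ.image ψ).image u).image φ := by
    intro u σ; rw [Finset.image_image, Finset.image_image]; rfl
  refine ⟨fun σ hσ => ?_, fun σ hσ => ?_, fun σ hσ => ?_⟩
  · rw [himg]; exact hφ _ (h.1 _ (hψ σ hσ))
  · rw [himg]; exact hφ _ (h.2.1 _ (hψ σ hσ))
  · rw [himg, himg, ← Finset.image_union]
    exact hφ _ (h.2.2 _ (hψ σ hσ))

theorem contigClass_comp {K : AbsSC V} {L : AbsSC W} {f g : V → V} {φ : V → W} {ψ : W → V}
    (h : ContigClass K K f g) (hφ : IsSimplicial K L φ) (hψ : IsSimplicial L K ψ) :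
    ContigClass L L (φ ∘ f ∘ ψ) (φ ∘ g ∘ ψ) := by
  induction h with
  | refl => exact Relation.ReflTransGen.refl
  | tail _ hbc ih => exact ih.tail (contig_comp hbc hφ hψ)

theorem contractible_transfer {K : AbsSC V} {L : AbsSC W} {φ : V → W} {ψ : W → V}
    (hφ : IsSimplicial K L φ) (hψ : IsSimplicial L K ψ)
    (h1 : ContigClass L L (φ ∘ ψ) id) : Contractible K → Contractible L := by
  rintro ⟨v, hv, hK⟩
  refine ⟨φ v, by simpa using hφ {v} hv, ?_⟩
  have h2 : ContigClass L L (φ ∘ id ∘ ψ) (φ ∘ (fun _ => v) ∘ ψ) :=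
    contigClass_comp hK hφ hψ
  have e1 : φ ∘ id ∘ ψ = φ ∘ ψ := rfl
  have e2 : φ ∘ (fun _ => v) ∘ ψ = fun _ => φ v := rfl
  rw [e1, e2] at h2
  exact (contigClass_symm h1).trans h2

/-! ### Strong collapses: deleting a dominated vertex -/

section Retraction

variable [Fintype V] {K : AbsSC V} {v : V}

theorem retraction_image_subset (hd : Dominated K v) {σ τ : Finset V}
    (hσ : σ ∈ K.faces) (hτ : MaximalFace K τ) (hστ : σ ⊆ τ) :
    σ.image (fun u => if u = v then hd.choose else u) ⊆ τ := by
  intro x hx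
  obtain ⟨u, hu, rfl⟩ := Finset.mem_image.1 hx
  by_cases huv : u = v
  · simp only [huv, if_pos rfl]
    exact hd.choose_spec.2.2.2 τ hτ (hστ (huv ▸ hu))
  · simp only [if_neg huv]; exact hστ hu

theorem retraction_simplicial (hd : Dominated K v) :
    IsSimplicial K (K.delete v) (fun u => if u = v then hd.choose else u) := by
  intro σ hσ
  obtain ⟨τ, hτ, hστ⟩ := exists_maximal K hσ
  refine ⟨K.down_closed τ hτ.1 _ (retraction_image_subset hd hσ hτ hστ)
    ((K.nonempty_of_mem σ hσ).image _), ?_⟩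
  intro hv
  obtain ⟨u, _, hu⟩ := Finset.mem_image.1 hv
  by_cases huv : u = v
  · rw [if_pos huv] at hu; exact hd.choose_spec.1 hu
  · rw [if_neg huv] at hu; exact huv hu

theorem retraction_image_of_not_mem (hd : Dominated K v) {σ : Finset V} (hv : v ∉ σ) :
    σ.image (fun u => if u = v then hd.choose else u) = σ :=
  image_eq_self fun x hx => by
    rcases eq_or_ne x v with rfl | hxv
    · exact absurd hx hv
    · exact if_neg hxv

theorem delete_incl_simplicial : IsSimplicial (K.delete v) K id := by
  intro σ hσ; rw [Finset.image_id]; exact hσ.1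

theorem contig_retraction_delete (hd : Dominated K v) :
    Contig (K.delete v) (K.delete v)
      (fun u => if u = v then hd.choose else u) id := by
  refine ⟨fun σ hσ => ?_, fun σ hσ => ?_, fun σ hσ => ?_⟩
  · rw [retraction_image_of_not_mem hd hσ.2]; exact hσ
  · rw [Finset.image_id]; exact hσ
  · rw [retraction_image_of_not_mem hd hσ.2, Finset.image_id, Finset.union_self]; exact hσ

theorem contig_retraction (hd : Dominated K v) :
    Contig K K (fun u => if u = v then hd.choose else u) id := by
  refine ⟨fun σ hσ => (retraction_simplicial hd σ hσ).1, fun σ hσ => ?_, fun σ hσ => ?_⟩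
  · rw [Finset.image_id]; exact hσ
  · rw [Finset.image_id]
    obtain ⟨τ, hτ, hστ⟩ := exists_maximal K hσ
    refine K.down_closed τ hτ.1 _
      (Finset.union_subset (retraction_image_subset hd hσ hτ hστ) hστ) ?_
    exact (K.nonempty_of_mem σ hσ).mono Finset.subset_union_right

theorem contractible_delete (hd : Dominated K v) (h : Contractible K) :
    Contractible (K.delete v) := by
  refine contractible_transfer (retraction_simplicial hd) delete_incl_simplicial ?_ h
  have : (fun u => if u = v then hd.choose else u) ∘ id
      = fun u => if u = v then hd.choose else u := rfl
  rw [this]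
  exact Relation.ReflTransGen.single (contig_retraction_delete hd)

theorem contractible_of_delete (hd : Dominated K v) (h : Contractible (K.delete v)) :
    Contractible K := by
  refine contractible_transfer (φ := id) (ψ := fun u => if u = v then hd.choose else u)
    delete_incl_simplicial (retraction_simplicial hd) ?_ h
  have : id ∘ (fun u => if u = v then hd.choose else u)
      = fun u => if u = v then hd.choose else u := rfl
  rw [this]
  exact Relation.ReflTransGen.single (contig_retraction hd)

end Retraction

/-! ### The suspension -/

@[simp] theorem mem_sumLeft {σ : Finset (V ⊕ W)} {x : V} :
    x ∈ sumLeft σ ↔ Sum.inl x ∈ σ := Finset.mem_preimage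

@[simp] theorem mem_sumRight {σ : Finset (V ⊕ W)} {x : W} :
    x ∈ sumRight σ ↔ Sum.inr x ∈ σ := Finset.mem_preimage

theorem sumLeft_mono {σ τ : Finset (V ⊕ W)} (h : σ ⊆ τ) : sumLeft σ ⊆ sumLeft τ := by
  intro x hx; rw [mem_sumLeft] at *; exact h hx

theorem sumRight_mono {σ τ : Finset (V ⊕ W)} (h : σ ⊆ τ) : sumRight σ ⊆ sumRight τ := by
  intro x hx; rw [mem_sumRight] at *; exact h hx

theorem sum_decomp (σ : Finset (V ⊕ W)) :
    (sumLeft σ).image Sum.inl ∪ (sumRight σ).image Sum.inr = σ := by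
  ext x
  cases x <;> simp

/-- The suspension of `K`: the join with `S⁰`. -/
def susp (K : AbsSC V) : AbsSC (V ⊕ Bool) where
  faces := {σ | σ.Nonempty ∧ (sumLeft σ = ∅ ∨ sumLeft σ ∈ K.faces) ∧ (sumRight σ).card ≤ 1}
  nonempty_of_mem := fun _ h => h.1
  down_closed := by
    intro σ hσ τ hτ hne
    refine ⟨hne, ?_, le_trans (Finset.card_le_card (sumRight_mono hτ)) hσ.2.2⟩
    rcases Finset.eq_empty_or_nonempty (sumLeft τ) with he | hne'
    · exact Or.inl he
    · rcases hσ.2.1 with he | hf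
      · exact absurd (he ▸ sumLeft_mono hτ) (fun hs => by
          simpa [Finset.subset_empty.1 hs] using hne')
      · exact Or.inr (K.down_closed _ hf _ (sumLeft_mono hτ) hne')

theorem mem_susp {K : AbsSC V} {σ : Finset (V ⊕ Bool)} :
    σ ∈ (susp K).faces ↔
      σ.Nonempty ∧ (sumLeft σ = ∅ ∨ sumLeft σ ∈ K.faces) ∧ (sumRight σ).card ≤ 1 :=
  Iff.rfl

theorem sumLeft_union {σ τ : Finset (V ⊕ W)} :
    sumLeft (σ ∪ τ) = sumLeft σ ∪ sumLeft τ := by ext x; simp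

theorem sumRight_union {σ τ : Finset (V ⊕ W)} :
    sumRight (σ ∪ τ) = sumRight σ ∪ sumRight τ := by ext x; simp

@[simp] theorem sumLeft_image_inl (τ : Finset V) :
    sumLeft ((τ.image Sum.inl : Finset (V ⊕ W))) = τ := by ext x; simp

@[simp] theorem sumLeft_image_inr (s : Finset W) :
    sumLeft ((s.image Sum.inr : Finset (V ⊕ W))) = ∅ := by ext x; simp

@[simp] theorem sumRight_image_inl (τ : Finset V) :
    sumRight ((τ.image Sum.inl : Finset (V ⊕ W))) = ∅ := by ext x; simp

@[simp] theorem sumRight_image_inr (s : Finset W) :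
    sumRight ((s.image Sum.inr : Finset (V ⊕ W))) = s := by ext x; simp

theorem susp_faces_iff {K : AbsSC V} (σ : Finset (V ⊕ Bool)) :
    σ ∈ (susp K).faces ↔
      σ.Nonempty ∧ ∃ (τ : Finset V) (s : Finset Bool),
        (τ = ∅ ∨ τ ∈ K.faces) ∧ s.card ≤ 1 ∧
        σ = τ.image Sum.inl ∪ s.image Sum.inr := by
  constructor
  · rintro ⟨hne, hl, hr⟩
    exact ⟨hne, sumLeft σ, sumRight σ, hl, hr, (sum_decomp σ).symm⟩
  · rintro ⟨hne, τ, s, hτ, hs, rfl⟩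
    refine ⟨hne, ?_, ?_⟩
    · rw [sumLeft_union, sumLeft_image_inl, sumLeft_image_inr, Finset.union_empty]
      exact hτ
    · rw [sumRight_union, sumRight_image_inl, sumRight_image_inr, Finset.empty_union]
      exact hs

theorem pole_mem {K : AbsSC V} (b : Bool) : ({Sum.inr b} : Finset (V ⊕ Bool)) ∈ (susp K).faces := by
  refine ⟨Finset.singleton_nonempty _, Or.inl ?_, ?_⟩
  · ext x; simp
  · have : sumRight ({Sum.inr b} : Finset (V ⊕ Bool)) = {b} := by ext x; simp
    rw [this]; simp

theorem inl_vertex {K : AbsSC V} {v : V} (h : ({Sum.inl v} : Finset (V ⊕ Bool)) ∈ (susp K).faces) :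
    {v} ∈ K.faces := by
  rcases h.2.1 with he | hf
  · exfalso
    have : v ∈ sumLeft ({Sum.inl v} : Finset (V ⊕ Bool)) := by simp
    rw [he] at this; simp at this
  · have : sumLeft ({Sum.inl v} : Finset (V ⊕ Bool)) = {v} := by ext x; simp
    rwa [this] at hf

theorem inl_vertex' {K : AbsSC V} {v : V} (h : {v} ∈ K.faces) :
    ({Sum.inl v} : Finset (V ⊕ Bool)) ∈ (susp K).faces := by
  refine ⟨Finset.singleton_nonempty _, Or.inr ?_, ?_⟩
  · have : sumLeft ({Sum.inl v} : Finset (V ⊕ Bool)) = {v} := by ext x; simp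
    rw [this]; exact h
  · have : sumRight ({Sum.inl v} : Finset (V ⊕ Bool)) = (∅ : Finset Bool) := by ext x; simp
    rw [this]; simp

/-- Both poles cannot lie in one face. -/
theorem not_both_poles {K : AbsSC V} {σ : Finset (V ⊕ Bool)} (hσ : σ ∈ (susp K).faces) :
    ¬ (Sum.inr true ∈ σ ∧ Sum.inr false ∈ σ) := by
  rintro ⟨h1, h2⟩
  have hsub : ({true, false} : Finset Bool) ⊆ sumRight σ := by
    intro b hb; rcases Finset.mem_insert.1 hb with rfl | hb
    · rwa [mem_sumRight]
    · rw [Finset.mem_singleton.1 hb, mem_sumRight]; exact h2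
  have := le_trans (Finset.card_le_card hsub) hσ.2.2
  simp at this

/-- A maximal face of `K` suspends to a maximal face of `susp K`. -/
theorem susp_maximal {K : AbsSC V} {ρ : Finset V} (hρ : MaximalFace K ρ) (b : Bool) :
    MaximalFace (susp K) (ρ.image Sum.inl ∪ {Sum.inr b}) := by
  have hone : ({Sum.inr b} : Finset (V ⊕ Bool)) = ({b} : Finset Bool).image Sum.inr := by simp
  constructor
  · rw [susp_faces_iff]
    refine ⟨?_, ρ, {b}, Or.inr hρ.1, by simp, by rw [hone]⟩
    exact Finset.Nonempty.mono Finset.subset_union_right (by simp)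
  · intro σ' hσ' hsub
    have hl : ρ ⊆ sumLeft σ' := by
      intro x hx
      rw [mem_sumLeft]
      exact hsub (Finset.mem_union_left _ (Finset.mem_image_of_mem _ hx))
    have hlf : sumLeft σ' ∈ K.faces := by
      rcases hσ'.2.1 with he | hf
      · exfalso
        obtain ⟨x, hx⟩ := hρ.1 |> K.nonempty_of_mem ρ
        have := hl hx
        rw [he] at this; simp at this
      · exact hf
    have hleq : ρ = sumLeft σ' := hρ.2 _ hlf hl
    have hr : ({b} : Finset Bool) ⊆ sumRight σ' := by
      intro x hx
      rw [Finset.mem_singleton.1 hx, mem_sumRight]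
      exact hsub (Finset.mem_union_right _ (Finset.mem_singleton_self _))
    have hreq : ({b} : Finset Bool) = sumRight σ' :=
      Finset.eq_of_subset_of_card_le hr (by simpa using hσ'.2.2)
    conv_rhs => rw [← sum_decomp σ']
    rw [← hleq, ← hreq, hone]

/-- The apex-domination transfers to the suspension. -/
theorem susp_dominated {K : AbsSC V} [Fintype V] {v : V} (hd : Dominated K v) :
    Dominated (susp K) (Sum.inl v) := by
  obtain ⟨v', hne, hv, hv', hdom⟩ := hd
  refine ⟨Sum.inl v', by simpa using hne, inl_vertex' hv, inl_vertex' hv', ?_⟩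
  intro σ hσ hvσ
  have hτ : sumLeft σ ∈ K.faces := by
    rcases hσ.1.2.1 with he | hf
    · exfalso
      have : v ∈ sumLeft σ := by rwa [mem_sumLeft]
      rw [he] at this; simp at this
    · exact hf
  obtain ⟨ρ, hρ, hsub⟩ := exists_maximal K hτ
  have hv'ρ : v' ∈ ρ := hdom ρ hρ (hsub (by rwa [mem_sumLeft]))
  have hface : σ ∪ ρ.image Sum.inl ∈ (susp K).faces := by
    refine ⟨Finset.Nonempty.mono Finset.subset_union_left hσ.1.1, ?_, ?_⟩
    · rw [sumLeft_union, sumLeft_image_inl]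
      exact Or.inr (by rw [Finset.union_eq_right.2 hsub]; exact hρ.1)
    · rw [sumRight_union, sumRight_image_inl, Finset.union_empty]
      exact hσ.1.2.2
  have := hσ.2 _ hface Finset.subset_union_left
  rw [this]
  exact Finset.mem_union_right _ (Finset.mem_image_of_mem _ hv'ρ)

theorem susp_delete {K : AbsSC V} (v : V) :
    (susp K).delete (Sum.inl v) = susp (K.delete v) := by
  apply ext_faces
  ext σ
  constructor
  · rintro ⟨⟨hne, hl, hr⟩, hv⟩
    refine ⟨hne, ?_, hr⟩
    rcases hl with he | hf
    · exact Or.inl he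
    · exact Or.inr ⟨hf, fun hm => hv (mem_sumLeft.1 hm)⟩
  · rintro ⟨hne, hl, hr⟩
    rcases hl with he | hf
    · exact ⟨⟨hne, Or.inl he, hr⟩, fun hm => by
        have : v ∈ sumLeft σ := mem_sumLeft.2 hm
        rw [he] at this; simp at this⟩
    · exact ⟨⟨hne, Or.inr hf.1, hr⟩, fun hm => hf.2 (mem_sumLeft.2 hm)⟩

/-- If `K` is minimal and has no unique vertex, then `susp K` is minimal. -/
theorem susp_minimal {K : AbsSC V} [Fintype V] (hK : Minimal K)
    (hcomp : ∀ v : V, {v} ∈ K.faces → ∃ u, u ≠ v ∧ {u} ∈ K.faces) :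
    Minimal (susp K) := by
  rintro x ⟨y, hyx, hx, hy, hdom⟩
  -- helper: a vertex v' lying (via inl) in every maximal face of susp K containing a pole
  cases x with
  | inr b =>
    obtain ⟨τ, hτ, hbτ⟩ := exists_maximal (susp K) hx
    have hbmem : Sum.inr b ∈ τ := hbτ (Finset.mem_singleton_self _)
    have hyτ : y ∈ τ := hdom τ hτ hbmem
    cases y with
    | inr b' =>
      have hb' : b' ≠ b := fun h => hyx (by rw [h])
      refine not_both_poles hτ.1 ?_
      cases b <;> cases b' <;> simp_all
    | inl v' =>
      have hv' : {v'} ∈ K.faces := inl_vertex hy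
      obtain ⟨u, huv, hu⟩ := hcomp v' hv'
      refine hK u ⟨v', huv.symm, hu, hv', ?_⟩
      intro ρ hρ _
      have hmax := susp_maximal hρ b
      have hin : Sum.inl v' ∈ ρ.image Sum.inl ∪ {Sum.inr b} :=
        hdom _ hmax (Finset.mem_union_right _ (Finset.mem_singleton_self _))
      rcases Finset.mem_union.1 hin with hh | hh
      · obtain ⟨w, hw, hww⟩ := Finset.mem_image.1 hh
        exact Sum.inl_injective hww ▸ hw
      · simp at hh
  | inl v =>
    have hvK : {v} ∈ K.faces := inl_vertex hx
    cases y with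
    | inr b =>
      have hface : ({Sum.inl v, Sum.inr (!b)} : Finset (V ⊕ Bool)) ∈ (susp K).faces := by
        rw [susp_faces_iff]
        refine ⟨by simp, {v}, {!b}, Or.inr hvK, by simp, ?_⟩
        rw [Finset.image_singleton, Finset.image_singleton]
        ext x; simp
      obtain ⟨τ, hτ, hsub⟩ := exists_maximal (susp K) hface
      have h1 : Sum.inr b ∈ τ := hdom τ hτ (hsub (by simp))
      have h2 : Sum.inr (!b) ∈ τ := hsub (by simp)
      refine not_both_poles hτ.1 ?_
      cases b <;> simp_all
    | inl v' =>
      have hv'K : {v'} ∈ K.faces := inl_vertex hy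
      have hvv' : v' ≠ v := fun h => hyx (by rw [h])
      refine hK v ⟨v', hvv', hvK, hv'K, ?_⟩
      intro ρ hρ hvρ
      have hmax := susp_maximal hρ true
      have hin : Sum.inl v' ∈ ρ.image Sum.inl ∪ {Sum.inr true} :=
        hdom _ hmax (Finset.mem_union_left _ (Finset.mem_image_of_mem _ hvρ))
      rcases Finset.mem_union.1 hin with hh | hh
      · obtain ⟨w, hw, hww⟩ := Finset.mem_image.1 hh
        exact Sum.inl_injective hww ▸ hw
      · simp at hh

/-! ### The key implication -/

/-- The set of vertices. -/
def Vtx (K : AbsSC V) : Set V := {v | {v} ∈ K.faces}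

theorem vtx_delete {K : AbsSC V} (v : V) : Vtx (K.delete v) = Vtx K \ {v} := by
  ext u
  simp only [Vtx, delete, Set.mem_setOf_eq, Set.mem_diff, Set.mem_singleton_iff]
  constructor
  · rintro ⟨h1, h2⟩
    exact ⟨h1, fun h => h2 (by simp [h])⟩
  · rintro ⟨h1, h2⟩
    exact ⟨h1, by simp [Finset.mem_singleton]; exact fun h => h2 h.symm⟩

/-- A complex whose faces all equal `{v}` is contractible. -/
theorem contractible_point {K : AbsSC V} {v : V} (hv : {v} ∈ K.faces)
    (huniq : ∀ u, {u} ∈ K.faces → u = v) : Contractible K := by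
  have hfaces : ∀ σ ∈ K.faces, σ = {v} := by
    intro σ hσ
    rw [Finset.eq_singleton_iff_nonempty_unique_mem]
    exact ⟨K.nonempty_of_mem σ hσ, fun x hx => huniq x (vertex_of_mem_face hσ hx)⟩
  refine ⟨v, hv, Relation.ReflTransGen.single ?_⟩
  refine ⟨fun σ hσ => by rwa [Finset.image_id], fun σ hσ => ?_, fun σ hσ => ?_⟩
  · rw [Finset.image_const (K.nonempty_of_mem σ hσ)]
    rw [← hfaces σ hσ]; exact hσ
  · rw [Finset.image_id, Finset.image_const (K.nonempty_of_mem σ hσ), hfaces σ hσ,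
      Finset.union_self]
    rwa [← hfaces σ hσ]

theorem contractible_of_susp [Fintype V] :
    ∀ (n : ℕ) (K : AbsSC V), (Vtx K).ncard ≤ n →
      Contractible (susp K) → Contractible K := by
  intro n
  induction n with
  | zero =>
    intro K hcard hsusp
    exfalso
    have hempty : Vtx K = ∅ := Set.ncard_eq_zero (Set.toFinite _) |>.1 (Nat.le_zero.1 hcard)
    have hmin : Minimal K := by
      rintro v ⟨v', _, hv, _, _⟩
      have : v ∈ Vtx K := hv
      rw [hempty] at this; exact this
    have hcomp : ∀ v : V, {v} ∈ K.faces → ∃ u, u ≠ v ∧ {u} ∈ K.faces := by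
      intro v hv
      exfalso
      have : v ∈ Vtx K := hv
      rw [hempty] at this; exact this
    obtain ⟨w, hw, hchain⟩ := hsusp
    have hrig := rigid (susp_minimal hmin hcomp) hchain
    have h1 : w = Sum.inr true := hrig (Sum.inr true) (pole_mem true)
    have h2 : w = Sum.inr false := hrig (Sum.inr false) (pole_mem false)
    rw [h1] at h2
    simp at h2
  | succ n ih =>
    intro K hcard hsusp
    by_cases hA : ∃ v, {v} ∈ K.faces ∧ ∀ u, {u} ∈ K.faces → u = v
    · obtain ⟨v, hv, huniq⟩ := hA
      exact contractible_point hv huniq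
    · by_cases hB : Minimal K
      · exfalso
        push_neg at hA
        have hcomp : ∀ v : V, {v} ∈ K.faces → ∃ u, u ≠ v ∧ {u} ∈ K.faces := by
          intro v hv
          obtain ⟨u, hu, hne⟩ := hA v hv
          exact ⟨u, hne, hu⟩
        obtain ⟨w, hw, hchain⟩ := hsusp
        have hrig := rigid (susp_minimal hB hcomp) hchain
        have h1 : w = Sum.inr true := hrig (Sum.inr true) (pole_mem true)
        have h2 : w = Sum.inr false := hrig (Sum.inr false) (pole_mem false)
        rw [h1] at h2
        simp at h2
      · have hdom : ∃ v, Dominated K v := by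
          by_contra hno
          push_neg at hno
          exact hB (fun v hv => hno v hv)
        obtain ⟨v, hdv⟩ := hdom
        have hsd : Dominated (susp K) (Sum.inl v) := susp_dominated hdv
        have h2 : Contractible ((susp K).delete (Sum.inl v)) :=
          contractible_delete hsd hsusp
        rw [susp_delete] at h2
        have hvmem : v ∈ Vtx K := hdv.choose_spec.2.1
        have hlt : (Vtx (K.delete v)).ncard ≤ n := by
          rw [vtx_delete]
          have := Set.ncard_diff_singleton_lt_of_mem hvmem (Set.toFinite _)
          omega
        have h3 : Contractible (K.delete v) := ih (K.delete v) hlt h2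
        exact contractible_of_delete hdv h3

/-! ### scat and contractibility -/

theorem catCover_zero_of_contractible {K : AbsSC V} (h : Contractible K) :
    CatCover K 0 := by
  obtain ⟨v, hv, hchain⟩ := h
  exact ⟨fun _ => K, fun _ => ⟨subset_rfl, v, hv, hchain⟩, fun σ hσ => ⟨0, hσ⟩⟩

theorem contractible_of_catCover_zero {K : AbsSC V} (h : CatCover K 0) :
    Contractible K := by
  obtain ⟨U, hcat, hcov⟩ := h
  have hfaces : (U 0).faces = K.faces := by
    apply Set.Subset.antisymm (hcat 0).1
    intro σ hσ
    obtain ⟨i, hi⟩ := hcov σ hσ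
    rwa [show i = 0 from Fin.ext (by omega)] at hi
  obtain ⟨_, v, hv, hchain⟩ := hcat 0
  exact ⟨v, hv, contigClass_congr hfaces hchain⟩

/-- The two cones cover the suspension. -/
theorem susp_catCover_one (K : AbsSC V) : CatCover (susp K) 1 := by
  refine ⟨fun i => (susp K).delete (Sum.inr (decide (i = 0))), fun i => ?_, fun σ hσ => ?_⟩
  · set b : Bool := decide (i = 0) with hb
    refine ⟨fun σ hσ => hσ.1, Sum.inr (!b), pole_mem (!b), Relation.ReflTransGen.single ?_⟩
    refine ⟨fun σ hσ => by rw [Finset.image_id]; exact hσ.1, fun σ hσ => ?_, fun σ hσ => ?_⟩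
    · rw [Finset.image_const ((susp K).nonempty_of_mem σ hσ.1)]
      exact pole_mem (!b)
    · rw [Finset.image_id, Finset.image_const ((susp K).nonempty_of_mem σ hσ.1)]
      have hrsub : sumRight (σ ∪ {Sum.inr (!b)}) ⊆ {!b} := by
        intro x hx
        rw [sumRight_union] at hx
        rcases Finset.mem_union.1 hx with hh | hh
        · rw [mem_sumRight] at hh
          rcases Bool.eq_or_eq_not x b with rfl | rfl
          · exact absurd hh hσ.2
          · simp
        · simpa using hh
      refine ⟨Finset.Nonempty.mono Finset.subset_union_left ((susp K).nonempty_of_mem σ hσ.1),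
        ?_, ?_⟩
      · rw [sumLeft_union]
        have : sumLeft ({Sum.inr (!b)} : Finset (V ⊕ Bool)) = (∅ : Finset V) := by
          ext x; simp
        rw [this, Finset.union_empty]
        exact hσ.1.2.1
      · calc (sumRight (σ ∪ {Sum.inr (!b)})).card ≤ ({!b} : Finset Bool).card :=
            Finset.card_le_card hrsub
          _ = 1 := Finset.card_singleton _
  · by_cases ht : Sum.inr true ∈ σ
    · refine ⟨1, hσ, fun hf => ?_⟩
      have : decide ((1 : Fin 2) = 0) = false := by decide
      rw [this] at hf
      exact not_both_poles hσ ⟨ht, hf⟩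
    · refine ⟨0, hσ, fun hf => ?_⟩
      have : decide ((0 : Fin 2) = 0) = true := by decide
      rw [this] at hf
      exact ht hf

end AbsSC


/-- if `scat K > 0` then the suspension `ΣK = K ∗ S⁰` has `scat = 1`. -/
theorem scat_suspension {V : Type} [DecidableEq V] [Fintype V]
    (K : AbsSC V) (C : AbsSC (V ⊕ Bool))
    (hC : ∀ σ : Finset (V ⊕ Bool), σ ∈ C.faces ↔
      σ.Nonempty ∧ ∃ (τ : Finset V) (s : Finset Bool),
        (τ = ∅ ∨ τ ∈ K.faces) ∧ s.card ≤ 1 ∧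
        σ = τ.image Sum.inl ∪ s.image Sum.inr)
    (h : 0 < AbsSC.scat K) : AbsSC.scat C = 1 := by
  classical
  have hCeq : C = AbsSC.susp K :=
    AbsSC.ext_faces (Set.ext fun σ => (hC σ).trans (AbsSC.susp_faces_iff σ).symm)
  subst hCeq
  -- K is not contractible
  have hnc : ¬ AbsSC.Contractible K := by
    intro hc
    have h0 : AbsSC.CatCover K 0 := AbsSC.catCover_zero_of_contractible hc
    have : AbsSC.scat K ≤ 0 := Nat.sInf_le h0
    omega
  have hncs : ¬ AbsSC.Contractible (AbsSC.susp K) := fun hc =>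
    hnc (AbsSC.contractible_of_susp (AbsSC.Vtx K).ncard K le_rfl hc)
  have h1 : AbsSC.CatCover (AbsSC.susp K) 1 := AbsSC.susp_catCover_one K
  have h0 : ¬ AbsSC.CatCover (AbsSC.susp K) 0 := fun hc =>
    hncs (AbsSC.contractible_of_catCover_zero hc)
  unfold AbsSC.scat
  have hle : sInf {n | AbsSC.CatCover (AbsSC.susp K) n} ≤ 1 := Nat.sInf_le h1
  have hne0 : sInf {n | AbsSC.CatCover (AbsSC.susp K) n} ≠ 0 := by
    intro hz
    rcases Nat.sInf_eq_zero.1 hz with hh | hh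
    · exact h0 hh
    · rw [Set.eq_empty_iff_forall_notMem] at hh
      exact hh 1 h1
  omega
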